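/- Let v_1, ..., v_m be vectors in ℤ^k with all entries of absolute value at most N, and suppose there exists λ₀ ∈ ℝ^k with v_i · λ₀ < 0 for all i. Then there exists an integer vector λ ∈ ℤ^k with every coordinate of absolute value at most (k·N)^{k+1} such that v_i · λ ≤ -1 for all i. -/

import Mathlib

set_option maxHeartbeats 1000000


lemma det_abs_le {n : ℕ} (M : Matrix (Fin n) (Fin n) ℤ) (c : Fin n → ℤ) (hM : ∀ i j, |M i j| ≤ c j) :
    |M.det| ≤ (Nat.factorial n : ℤ) * ∏ j, c j := by
  rw [Matrix.det_apply]
  calc |∑ σ : Equiv.Perm (Fin n), Equiv.Perm.sign σ • ∏ i, M (σ i) i|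
      ≤ ∑ σ : Equiv.Perm (Fin n), |Equiv.Perm.sign σ • ∏ i, M (σ i) i| :=
        Finset.abs_sum_le_sum_abs _ _
    _ ≤ ∑ _σ : Equiv.Perm (Fin n), ∏ j, c j := by
        refine Finset.sum_le_sum fun σ _ => ?_
        have h1 : |Equiv.Perm.sign σ • ∏ i, M (σ i) i| = |∏ i, M (σ i) i| := by
          rcases Int.units_eq_one_or (Equiv.Perm.sign σ) with h | h <;>
            simp [h, Units.smul_def]
        rw [h1, Finset.abs_prod]
        exact Finset.prod_le_prod (fun i _ => abs_nonneg _) (fun i _ => hM (σ i) i)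
    _ = (Nat.factorial n : ℤ) * ∏ j, c j := by
        rw [Finset.sum_const, Finset.card_univ, Fintype.card_perm, Fintype.card_fin,
          nsmul_eq_mul]

lemma fact_le_pow_pred : ∀ k : ℕ, Nat.factorial k ≤ k ^ (k - 1)
  | 0 => by simp
  | 1 => by simp
  | (k+2) => by
    have ih : Nat.factorial (k+1) ≤ (k+1)^k := fact_le_pow_pred (k+1)
    calc Nat.factorial (k+2) = (k+2) * Nat.factorial (k+1) := rfl
      _ ≤ (k+2) * (k+1)^k := Nat.mul_le_mul_left _ ih
      _ ≤ (k+2) * (k+2)^k := Nat.mul_le_mul_left _ (Nat.pow_le_pow_left (by omega) k)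
      _ = (k+2)^(k+1) := by ring


open Submodule in
lemma exists_cols {n K : ℕ} (R : Fin n → Fin K → ℝ) (hR : LinearIndependent ℝ R) :
    ∃ σ : Fin n → Fin K, Function.Injective σ ∧ (Matrix.of fun a b => R a (σ b)).det ≠ 0 := by
  classical
  set cols : Fin K → (Fin n → ℝ) := fun t a => R a t with hcols
  have hspan : Submodule.span ℝ (Set.range cols) = ⊤ := by
    by_contra hne
    have hlt : Submodule.span ℝ (Set.range cols) < ⊤ := lt_top_iff_ne_top.mpr hne
    obtain ⟨f, hf0, hfmap⟩ :=
      Submodule.exists_dual_map_eq_bot_of_lt_top hlt inferInstance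
    have hfv : ∀ t, f (cols t) = 0 := by
      intro t
      have hmem : f (cols t) ∈ Submodule.map f (Submodule.span ℝ (Set.range cols)) :=
        ⟨cols t, Submodule.subset_span (Set.mem_range_self t), rfl⟩
      rw [hfmap] at hmem
      simpa using hmem
    set z : Fin n → ℝ := fun a => f (fun j => if a = j then 1 else 0) with hz
    have hzero : ∑ a, z a • R a = 0 := by
      funext t
      have h1 := LinearMap.pi_apply_eq_sum_univ f (cols t)
      rw [hfv t] at h1
      have : (0:ℝ) = ∑ a, R a t * z a := by
        rw [h1]; exact Finset.sum_congr rfl fun a _ => by simp [hcols, hz, smul_eq_mul]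
      simpa [Finset.sum_apply, mul_comm] using this.symm
    have hzz : ∀ a, z a = 0 := Fintype.linearIndependent_iff.mp hR z hzero
    apply hf0
    ext x
    have hx := hzz x
    rw [hz] at hx
    have hps : (Pi.single x 1 : Fin n → ℝ) = fun j => if x = j then 1 else 0 := by
      funext j; rw [Pi.single_apply]; simp [eq_comm]
    simp [LinearMap.comp_apply, LinearMap.single_apply, hps, hx]
  obtain ⟨b, hbsub, hbspan, hbli⟩ := exists_linearIndependent ℝ (Set.range cols)
  have hbfin : b.Finite := (Set.finite_range cols).subset hbsub
  haveI : Fintype b := hbfin.fintype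
  rw [hspan] at hbspan
  have hcard : Fintype.card b = n := by
    apply le_antisymm
    · simpa [Module.finrank_pi] using hbli.fintype_card_le_finrank
    · have h1 : Module.finrank ℝ ↥(Submodule.span ℝ b) ≤ b.toFinset.card :=
        finrank_span_le_card b
      rw [hbspan] at h1
      simpa [Module.finrank_pi, Set.toFinset_card] using h1
  let eb : Fin n ≃ b := (Fintype.equivFinOfCardEq hcard).symm
  have hchoice : ∀ j : Fin n, ∃ t, cols t = (eb j : Fin n → ℝ) := fun j => hbsub (eb j).2
  choose σ hσ using hchoice
  have hrange : Set.range (fun j : Fin n => (eb j : Fin n → ℝ)) = b := by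
    ext x
    constructor
    · rintro ⟨j, rfl⟩; exact (eb j).2
    · intro hx
      exact ⟨eb.symm ⟨x, hx⟩, by simp⟩
  refine ⟨σ, ?_, ?_⟩
  · intro j j' he
    have h2 : (eb j : Fin n → ℝ) = eb j' := by rw [← hσ j, ← hσ j', he]
    exact eb.injective (Subtype.coe_injective h2)
  · have hli2 : LinearIndependent ℝ (fun j : Fin n => (eb j : Fin n → ℝ)) :=
      hbli.comp eb eb.injective
    have hsp2 : Submodule.span ℝ (Set.range fun j : Fin n => (eb j : Fin n → ℝ)) = ⊤ := by
      rw [hrange, hbspan]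
    have hunit := (Module.Basis.is_basis_iff_det (Pi.basisFun ℝ (Fin n))).mp ⟨hli2, hsp2⟩
    rw [Module.Basis.det_apply] at hunit
    have hmat : (Pi.basisFun ℝ (Fin n)).toMatrix (fun j : Fin n => (eb j : Fin n → ℝ))
        = Matrix.of fun a b => R a (σ b) := by
      ext a j
      rw [Module.Basis.toMatrix_apply, Pi.basisFun_repr, ← hσ j]
      rfl
    rw [hmat] at hunit
    exact hunit.ne_zero


lemma intdet {n' : Type*} [DecidableEq n'] [Fintype n'] (M : Matrix n' n' ℤ) :
    ((M.det : ℤ) : ℝ) = (M.map (Int.cast : ℤ → ℝ)).det := by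
  have h := RingHom.map_det (Int.castRingHom ℝ) M
  simpa [RingHom.mapMatrix_apply] using h

lemma key {k N : ℕ} (hN : 1 ≤ N) {ι : Type} [Fintype ι] [Nonempty ι]
    (w : ι → Fin k → ℤ) (hw : ∀ i t, |w i t| ≤ (N:ℤ))
    (p : Fin k → ℝ) (a : ι → ℝ) (ha1 : ∑ i, a i = 1)
    (hpa : ∀ t, p t = ∑ i, a i * (w i t : ℝ))
    (r : ℝ) (hr : r ≠ 0) (hwp : ∀ i, ∑ t, (w i t : ℝ) * p t = r) :
    ∃ g : Fin k → ℤ, (∀ t, |g t| ≤ (Nat.factorial k : ℤ) * (N:ℤ)^(k-1)) ∧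
      1 ≤ |∑ t, (g t : ℝ) * p t| := by
  classical
  set wZ : ι → Fin (k+1) → ℤ := fun i => Fin.snoc (w i) 1 with hwZdef
  set wR : ι → Fin (k+1) → ℝ := fun i t => (wZ i t : ℝ) with hwRdef
  set el : Fin (k+1) → ℝ := fun t => if t = Fin.last k then 1 else 0 with heldef
  set L : (Fin (k+1) → ℝ) →ₗ[ℝ] ℝ :=
    (∑ t : Fin k, p t • LinearMap.proj (R := ℝ) (φ := fun _ : Fin (k+1) => ℝ) t.castSucc)
      - r • LinearMap.proj (Fin.last k) with hLdef
  have hLapp : ∀ y, L y = (∑ t : Fin k, p t * y t.castSucc) - r * y (Fin.last k) := by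
    intro y
    simp [hLdef, LinearMap.sum_apply, LinearMap.smul_apply, LinearMap.proj_apply, smul_eq_mul]
  have hwRcs : ∀ i (t : Fin k), wR i t.castSucc = (w i t : ℝ) := by
    intro i t; simp [hwRdef, hwZdef, Fin.snoc_castSucc]
  have hwRl : ∀ i, wR i (Fin.last k) = 1 := by
    intro i; simp [hwRdef, hwZdef, Fin.snoc_last]
  have hLw : ∀ i, L (wR i) = 0 := by
    intro i
    rw [hLapp, hwRl i,
      show (∑ t : Fin k, p t * wR i t.castSucc) = ∑ t, (w i t:ℝ) * p t from
        Finset.sum_congr rfl fun t _ => by rw [hwRcs i t, mul_comm],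
      hwp i]
    ring
  have hLel : L el = -r := by
    rw [hLapp]
    rw [Finset.sum_eq_zero (fun t _ => by simp [heldef, (Fin.castSucc_lt_last t).ne] : ∀ t ∈ Finset.univ, p t * el t.castSucc = 0)]
    simp [heldef]
  have helspan : el ∉ Submodule.span ℝ (Set.range wR) := by
    intro hmem
    have hker : Submodule.span ℝ (Set.range wR) ≤ LinearMap.ker L :=
      Submodule.span_le.mpr (by rintro x ⟨i, rfl⟩; simpa [LinearMap.mem_ker] using hLw i)
    have h2 := hker hmem
    rw [LinearMap.mem_ker, hLel] at h2
    exact hr (neg_eq_zero.mp h2)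
  obtain ⟨b, hbsub, hbspan, hbli⟩ := exists_linearIndependent ℝ (Set.range wR)
  have hbfin : b.Finite := (Set.finite_range wR).subset hbsub
  haveI : Fintype b := hbfin.fintype
  set n := Fintype.card b with hn
  let eb : Fin n ≃ b := (Fintype.equivFin ↥b).symm
  have hrange : Set.range (fun j : Fin n => (eb j : Fin (k+1) → ℝ)) = b := by
    ext x
    constructor
    · rintro ⟨j, rfl⟩; exact (eb j).2
    · intro hx; exact ⟨eb.symm ⟨x, hx⟩, by simp⟩
  set Rw : Fin (n+1) → (Fin (k+1) → ℝ) :=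
    Fin.cons el (fun j => (eb j : Fin (k+1) → ℝ)) with hRwdef
  have hli : LinearIndependent ℝ Rw := by
    rw [hRwdef, linearIndependent_fin_cons]
    refine ⟨hbli.comp eb eb.injective, ?_⟩
    rw [hrange, hbspan]
    exact helspan
  obtain ⟨σ, hσinj, hdet⟩ := exists_cols Rw hli
  have hnk : n ≤ k := by
    have h3 := hli.fintype_card_le_finrank
    simp only [Module.finrank_pi, Fintype.card_fin] at h3
    omega
  have hidxe : ∀ j : Fin n, ∃ i, wR i = (eb j : Fin (k+1) → ℝ) := fun j => hbsub (eb j).2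
  choose idx hidx using hidxe
  set RZ : Fin (n+1) → Fin (k+1) → ℤ :=
    Fin.cons (fun t => if t = Fin.last k then 1 else 0) (fun j => wZ (idx j)) with hRZdef
  have hcast : ∀ a t, (RZ a t : ℝ) = Rw a t := by
    intro a t
    refine Fin.cases ?_ ?_ a
    · simp [hRZdef, hRwdef, heldef, apply_ite (Int.cast : ℤ → ℝ)]
    · intro j
      rw [hRZdef, hRwdef]
      simp only [Fin.cons_succ]
      rw [← hidx j]
  set QZ : Matrix (Fin (n+1)) (Fin (n+1)) ℤ := Matrix.of fun a b => RZ a (σ b) with hQZdef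
  set QR : Matrix (Fin (n+1)) (Fin (n+1)) ℝ := Matrix.of fun a b => Rw a (σ b) with hQRdef
  have hQcast : QZ.map (Int.cast : ℤ → ℝ) = QR := by
    ext a b; simp [hQZdef, hQRdef, Matrix.map_apply, hcast]
  have h4 : ((QZ.det : ℤ) : ℝ) = QR.det := by rw [intdet, hQcast]
  have hdetZ : QZ.det ≠ 0 := by
    intro h0
    apply hdet
    rw [← h4, h0, Int.cast_zero]
  set Dz : Fin (n+1) → ℤ := fun j => (QZ.submatrix Fin.succ j.succAbove).det with hDzdef
  set hh : Fin (k+1) → ℤ :=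
    fun t => ∑ j : Fin (n+1), if σ j = t then (-1)^(j:ℕ) * Dz j else 0 with hhhdef
  have hhcast : ∀ t, ((hh t : ℤ) : ℝ) = ∑ j : Fin (n+1),
      if σ j = t then ((-1:ℝ))^(j:ℕ) * (Dz j : ℝ) else 0 := by
    intro t
    rw [hhhdef]
    push_cast [apply_ite (Int.cast : ℤ → ℝ)]
    rfl
  have hsubdet : ∀ (y : Fin (k+1) → ℝ) (j : Fin (n+1)),
      (((QR.updateRow 0 (fun b => y (σ b))).submatrix Fin.succ j.succAbove)).det
        = ((Dz j : ℤ) : ℝ) := by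
    intro y j
    have h1 : (QR.updateRow 0 (fun b => y (σ b))).submatrix Fin.succ j.succAbove
        = (QZ.submatrix Fin.succ j.succAbove).map (Int.cast : ℤ → ℝ) := by
      ext a b
      simp only [Matrix.submatrix_apply, Matrix.map_apply]
      rw [Matrix.updateRow_ne (Fin.succ_ne_zero a)]
      rw [← hQcast]; rfl
    rw [h1, hDzdef, ← intdet]
  have hexp : ∀ y : Fin (k+1) → ℝ, (∑ t, (hh t : ℝ) * y t)
      = (QR.updateRow 0 (fun b => y (σ b))).det := by
    intro y
    rw [Matrix.det_succ_row_zero]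
    calc ∑ t, (hh t:ℝ) * y t
        = ∑ t, ∑ j : Fin (n+1),
            (if σ j = t then ((-1:ℝ))^(j:ℕ) * (Dz j : ℝ) else 0) * y t := by
          refine Finset.sum_congr rfl fun t _ => ?_
          rw [hhcast, Finset.sum_mul]
      _ = ∑ j : Fin (n+1), ∑ t,
            (if σ j = t then ((-1:ℝ))^(j:ℕ) * (Dz j : ℝ) else 0) * y t := Finset.sum_comm
      _ = ∑ j : Fin (n+1), ((-1:ℝ))^(j:ℕ) * (Dz j : ℝ) * y (σ j) := by
          refine Finset.sum_congr rfl fun j _ => ?_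
          rw [show (∑ t, (if σ j = t then ((-1:ℝ))^(j:ℕ) * (Dz j : ℝ) else 0) * y t)
              = ∑ t, if σ j = t then ((-1:ℝ))^(j:ℕ) * (Dz j : ℝ) * y t else 0 from
            Finset.sum_congr rfl fun t _ => by rw [ite_mul, zero_mul]]
          rw [Finset.sum_ite_eq]
          simp
      _ = ∑ j : Fin (n+1), (-1)^(j:ℕ) * (QR.updateRow 0 (fun b => y (σ b))) 0 j
            * ((QR.updateRow 0 (fun b => y (σ b))).submatrix Fin.succ j.succAbove).det := by
          refine Finset.sum_congr rfl fun j _ => ?_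
          rw [hsubdet y j, Matrix.updateRow_self]
          ring
  -- the linear functional given by hh
  set Lh : (Fin (k+1) → ℝ) →ₗ[ℝ] ℝ :=
    (∑ t : Fin (k+1), ((hh t : ℝ) • LinearMap.proj (R := ℝ) (φ := fun _ : Fin (k+1) => ℝ) t))
      with hLhdef
  have hLhapp : ∀ y, Lh y = ∑ t, (hh t : ℝ) * y t := by
    intro y
    simp [hLhdef, LinearMap.sum_apply, LinearMap.smul_apply, LinearMap.proj_apply, smul_eq_mul]
  have hLhb : ∀ x ∈ b, Lh x = 0 := by
    intro x hx
    set j : Fin n := eb.symm ⟨x, hx⟩ with hjdef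
    have hxe : (eb j : Fin (k+1) → ℝ) = x := by rw [hjdef]; simp
    rw [hLhapp, ← hxe, hexp]
    refine Matrix.det_zero_of_row_eq (i := (0 : Fin (n+1))) (j := j.succ)
      (Fin.succ_ne_zero j).symm ?_
    rw [Matrix.updateRow_self, Matrix.updateRow_ne (Fin.succ_ne_zero j)]
    funext c
    rw [hQRdef]
    show (eb j : Fin (k+1) → ℝ) (σ c) = Rw j.succ (σ c)
    rw [hRwdef]
    simp [Fin.cons_succ]
  have hvanish : ∀ i : ι, ∑ t, (hh t : ℝ) * wR i t = 0 := by
    intro i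
    have hmem : wR i ∈ Submodule.span ℝ b := by
      rw [hbspan]
      exact Submodule.subset_span (Set.mem_range_self i)
    have hker : Submodule.span ℝ b ≤ LinearMap.ker Lh :=
      Submodule.span_le.mpr (fun x hx => by simpa [LinearMap.mem_ker] using hLhb x hx)
    have h5 := hker hmem
    rw [LinearMap.mem_ker, hLhapp] at h5
    exact h5
  have hlast : hh (Fin.last k) = QZ.det := by
    have h6 : ∑ t, (hh t : ℝ) * el t = ((hh (Fin.last k) : ℤ) : ℝ) := by
      rw [show (∑ t, (hh t:ℝ) * el t) = ∑ t, if t = Fin.last k then (hh t : ℝ) else 0 from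
        Finset.sum_congr rfl fun t _ => by by_cases ht : t = Fin.last k <;> simp [heldef, ht]]
      rw [Finset.sum_ite_eq' Finset.univ (Fin.last k) (fun t => ((hh t : ℤ) : ℝ))]
      simp
    have h7 : (QR.updateRow 0 (fun c => el (σ c))) = QR := by
      have h8 : (fun c => el (σ c)) = QR 0 := by
        funext c
        rw [hQRdef]
        show el (σ c) = Rw 0 (σ c)
        rw [hRwdef]
        simp [Fin.cons_zero]
      rw [h8, Matrix.updateRow_eq_self]
    have h9 := hexp el
    rw [h6, h7, ← h4] at h9
    exact_mod_cast h9
  refine ⟨fun t => hh t.castSucc, ?_, ?_⟩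
  · -- the bound
    intro t
    show |hh t.castSucc| ≤ (Nat.factorial k : ℤ) * (N:ℤ)^(k-1)
    by_cases hex : ∃ j, σ j = t.castSucc
    · obtain ⟨j, hj⟩ := hex
      have hval : hh t.castSucc = (-1)^(j:ℕ) * Dz j := by
        have e1 : hh t.castSucc
            = ∑ j' : Fin (n+1), if σ j' = t.castSucc then (-1)^(j':ℕ) * Dz j' else 0 := rfl
        rw [e1, Finset.sum_eq_single j ?_ ?_, if_pos hj]
        · intro j' _ hj'
          refine if_neg (fun hc => hj' ?_)
          exact hσinj (hc.trans hj.symm)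
        · intro habs
          exact absurd (Finset.mem_univ j) habs
      -- find the column hitting the last coordinate
      have hj0 : ∃ j0, σ j0 = Fin.last k := by
        by_contra hno
        push_neg at hno
        apply hdetZ
        apply Matrix.det_eq_zero_of_row_eq_zero (i := (0 : Fin (n+1)))
        intro c
        rw [hQZdef]
        show RZ 0 (σ c) = 0
        rw [hRZdef]
        simp [Fin.cons_zero, hno c]
      obtain ⟨j0, hj0⟩ := hj0
      have hjj0 : j0 ≠ j := by
        intro hc
        rw [hc, hj] at hj0
        exact (Fin.castSucc_lt_last t).ne' hj0.symm
      obtain ⟨b0, hb0⟩ := Fin.exists_succAbove_eq hjj0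
      set cb : Fin n → ℤ := fun c => if σ (j.succAbove c) = Fin.last k then 1 else (N:ℤ)
        with hcbdef
      have hentry : ∀ a c, |(QZ.submatrix Fin.succ j.succAbove) a c| ≤ cb c := by
        intro a c
        have e2 : (QZ.submatrix Fin.succ j.succAbove) a c = wZ (idx a) (σ (j.succAbove c)) := by
          simp only [Matrix.submatrix_apply, hQZdef, Matrix.of_apply, hRZdef, Fin.cons_succ]
        have e3 : cb c = if σ (j.succAbove c) = Fin.last k then 1 else (N:ℤ) := rfl
        rw [e2, e3]
        by_cases hc : σ (j.succAbove c) = Fin.last k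
        · rw [if_pos hc, hc]
          have e4 : wZ (idx a) (Fin.last k) = 1 := by simp [hwZdef, Fin.snoc_last]
          rw [e4]
          simp
        · rw [if_neg hc]
          obtain ⟨c', hc'⟩ := Fin.exists_castSucc_eq.mpr hc
          rw [← hc']
          have e5 : wZ (idx a) c'.castSucc = w (idx a) c' := by
            simp [hwZdef, Fin.snoc_castSucc]
          rw [e5]
          exact hw _ _
      have hD := det_abs_le _ cb hentry
      have hprod : ∏ c, cb c ≤ (N:ℤ)^(n-1) := by
        have hle : ∀ c ∈ Finset.univ, cb c ≤ (if c = b0 then 1 else (N:ℤ)) := by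
          intro c _
          have e3 : cb c = if σ (j.succAbove c) = Fin.last k then 1 else (N:ℤ) := rfl
          rw [e3]
          by_cases hc : c = b0
          · subst hc
            rw [hb0, if_pos hj0, if_pos rfl]
          · rw [if_neg hc]
            by_cases hcl : σ (j.succAbove c) = Fin.last k
            · exfalso
              apply hc
              have := hσinj (hcl.trans hj0.symm)
              exact Fin.succAbove_right_injective (this.trans hb0.symm)
            · rw [if_neg hcl]
        have hnn : ∀ c ∈ Finset.univ, (0:ℤ) ≤ cb c := by
          intro c _
          have e3 : cb c = if σ (j.succAbove c) = Fin.last k then 1 else (N:ℤ) := rfl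
          rw [e3]
          by_cases hc : σ (j.succAbove c) = Fin.last k <;> simp [hc]
        calc ∏ c, cb c ≤ ∏ c, (if c = b0 then 1 else (N:ℤ)) :=
              Finset.prod_le_prod hnn hle
          _ = (N:ℤ)^(n-1) := by
              rw [← Finset.mul_prod_erase Finset.univ _ (Finset.mem_univ b0)]
              rw [if_pos rfl, one_mul]
              rw [Finset.prod_congr rfl (fun c hc => if_neg (Finset.ne_of_mem_erase hc))]
              rw [Finset.prod_const, Finset.card_erase_of_mem (Finset.mem_univ b0),
                Finset.card_univ, Fintype.card_fin]
      have habsval : |hh t.castSucc| = |Dz j| := by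
        rw [hval, abs_mul, abs_pow, abs_neg, abs_one, one_pow, one_mul]
      rw [habsval]
      calc |Dz j| ≤ (Nat.factorial n : ℤ) * ∏ c, cb c := hD
        _ ≤ (Nat.factorial n : ℤ) * (N:ℤ)^(n-1) := by
            apply mul_le_mul_of_nonneg_left hprod
            exact_mod_cast Nat.zero_le _
        _ ≤ (Nat.factorial k : ℤ) * (N:ℤ)^(k-1) := by
            apply mul_le_mul
            · exact_mod_cast Nat.factorial_le hnk
            · apply pow_le_pow_right₀ (by exact_mod_cast hN)
              omega
            · positivity
            · exact_mod_cast Nat.zero_le _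
    · have hz : hh t.castSucc = 0 := by
        have e1 : hh t.castSucc
            = ∑ j' : Fin (n+1), if σ j' = t.castSucc then (-1)^(j':ℕ) * Dz j' else 0 := rfl
        rw [e1]
        exact Finset.sum_eq_zero fun j _ => if_neg (fun hc => hex ⟨j, hc⟩)
      rw [hz]
      simp only [abs_zero]
      positivity
  · -- the inner product lower bound
    show (1:ℝ) ≤ |∑ t, ((hh t.castSucc : ℤ) : ℝ) * p t|
    have hge : ∀ i : ι, ∑ t, ((hh t.castSucc : ℤ) : ℝ) * (w i t : ℝ) = -(QZ.det : ℝ) := by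
      intro i
      have h0 := hvanish i
      rw [Fin.sum_univ_castSucc] at h0
      rw [hwRl i, hlast] at h0
      have : ∑ t : Fin k, (hh t.castSucc : ℝ) * wR i t.castSucc = -(QZ.det : ℝ) := by
        rw [mul_one] at h0; linarith
      rw [← this]
      exact Finset.sum_congr rfl fun t _ => by rw [hwRcs i t]
    have hgp : ∑ t, ((hh t.castSucc : ℤ) : ℝ) * p t = -(QZ.det : ℝ) := by
      calc ∑ t, ((hh t.castSucc : ℤ) : ℝ) * p t
          = ∑ t, ∑ i, a i * (((hh t.castSucc : ℤ) : ℝ) * (w i t : ℝ)) := by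
            refine Finset.sum_congr rfl fun t _ => ?_
            rw [hpa t, Finset.mul_sum]
            exact Finset.sum_congr rfl fun i _ => by ring
        _ = ∑ i, a i * ∑ t, ((hh t.castSucc : ℤ) : ℝ) * (w i t : ℝ) := by
            rw [Finset.sum_comm]
            exact Finset.sum_congr rfl fun i _ => by rw [Finset.mul_sum]
        _ = ∑ i, a i * (-(QZ.det : ℝ)) := by
            exact Finset.sum_congr rfl fun i _ => by rw [hge i]
        _ = -(QZ.det : ℝ) := by rw [← Finset.sum_mul, ha1, one_mul]
    rw [hgp, abs_neg]
    have : (1:ℤ) ≤ |QZ.det| := Int.one_le_abs hdetZ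
    calc (1:ℝ) = ((1:ℤ) : ℝ) := by norm_num
      _ ≤ (|QZ.det| : ℝ) := by exact_mod_cast this
      _ = |((QZ.det : ℤ) : ℝ)| := by push_cast; ring


theorem stmt_4 {m k : ℕ} (N : ℕ) (v : Fin m → Fin k → ℤ)
    (hv : ∀ i t, |v i t| ≤ (N : ℤ))
    (h : ∃ lam0 : Fin k → ℝ, ∀ i, ∑ t, (v i t : ℝ) * lam0 t < 0) :
    ∃ lam : Fin k → ℤ, (∀ t, |lam t| ≤ ((k * N : ℕ) : ℤ) ^ (k + 1)) ∧
      ∀ i, ∑ t, v i t * lam t ≤ -1 := by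
  classical
  obtain ⟨lam0, hlam0⟩ := h
  rcases Nat.eq_zero_or_pos m with hm | hm
  · subst hm
    refine ⟨0, ?_, ?_⟩
    · intro t; simp; positivity
    · intro i; exact i.elim0
  have i0 : Fin m := ⟨0, hm⟩
  rcases Nat.eq_zero_or_pos k with hk0 | hk
  · subst hk0
    exact absurd (hlam0 i0) (by simp)
  have hN : 1 ≤ N := by
    by_contra hN0
    push_neg at hN0
    have hN0' : N = 0 := by omega
    subst hN0'
    have hv0 : ∀ i t, v i t = (0:ℤ) := fun i t =>
      abs_eq_zero.mp (le_antisymm (by exact_mod_cast hv i t) (abs_nonneg _))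
    have := hlam0 i0
    rw [Finset.sum_eq_zero (fun t _ => by rw [hv0 i0 t]; norm_num)] at this
    exact absurd this (by norm_num)
  -- minimize the norm over the simplex
  set F : (Fin m → ℝ) → ℝ := fun a => ∑ t, (∑ i, a i * (v i t : ℝ))^2 with hFdef
  have hFcont : Continuous F := by
    apply continuous_finset_sum
    intro t _
    exact (continuous_finset_sum _ (fun i _ => (continuous_apply i).mul continuous_const)).pow 2
  have hne : (stdSimplex ℝ (Fin m)).Nonempty := by
    refine ⟨fun _ => (m:ℝ)⁻¹, fun _ => by positivity, ?_⟩
    rw [Finset.sum_const, Finset.card_univ, Fintype.card_fin, nsmul_eq_mul]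
    field_simp
  obtain ⟨A, hAmem, hAmin⟩ :=
    (isCompact_stdSimplex ℝ (Fin m)).exists_isMinOn hne hFcont.continuousOn
  have hA0 : ∀ i, 0 ≤ A i := hAmem.1
  have hA1 : ∑ i, A i = 1 := hAmem.2
  set p : Fin k → ℝ := fun t => ∑ i, A i * (v i t : ℝ) with hpdef
  set Q : ℝ := ∑ t, p t ^ 2 with hQdef
  -- Q > 0
  have hQnn : 0 ≤ Q := Finset.sum_nonneg fun t _ => sq_nonneg _
  obtain ⟨i1, hi1⟩ : ∃ i, A i ≠ 0 := by
    by_contra hc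
    push_neg at hc
    rw [Finset.sum_eq_zero (fun i _ => hc i)] at hA1
    norm_num at hA1
  have hi1pos : 0 < A i1 := lt_of_le_of_ne (hA0 i1) (Ne.symm hi1)
  have hQpos : 0 < Q := by
    rcases lt_or_eq_of_le hQnn with h' | h'
    · exact h'
    have hp0 : ∀ t, p t = 0 := by
      intro t
      have hz : ∑ t, p t ^ 2 = 0 := h'.symm
      have h2 := (Finset.sum_eq_zero_iff_of_nonneg (fun t _ => sq_nonneg (p t))).mp hz
      have h3 := h2 t (Finset.mem_univ t)
      exact pow_eq_zero_iff two_ne_zero |>.mp h3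
    exfalso
    have hswap : ∑ i, A i * (∑ t, (v i t:ℝ) * lam0 t) = ∑ t, p t * lam0 t := by
      calc ∑ i, A i * (∑ t, (v i t:ℝ) * lam0 t)
          = ∑ i, ∑ t, A i * (v i t:ℝ) * lam0 t := by
            refine Finset.sum_congr rfl fun i _ => ?_
            rw [Finset.mul_sum]
            exact Finset.sum_congr rfl fun t _ => by ring
        _ = ∑ t, ∑ i, A i * (v i t:ℝ) * lam0 t := Finset.sum_comm
        _ = ∑ t, (∑ i, A i * (v i t:ℝ)) * lam0 t := by
            refine Finset.sum_congr rfl fun t _ => ?_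
            rw [Finset.sum_mul]
        _ = ∑ t, p t * lam0 t := rfl
    have hneg : ∑ i, A i * (∑ t, (v i t:ℝ) * lam0 t) < 0 := by
      have hlt : A i1 * (∑ t, (v i1 t:ℝ) * lam0 t) < 0 :=
        mul_neg_of_pos_of_neg hi1pos (hlam0 i1)
      calc ∑ i, A i * (∑ t, (v i t:ℝ) * lam0 t) < ∑ _i : Fin m, (0:ℝ) := by
            refine Finset.sum_lt_sum (fun i _ => ?_) ⟨i1, Finset.mem_univ i1, hlt⟩
            have h5 := mul_le_mul_of_nonneg_left (le_of_lt (hlam0 i)) (hA0 i)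
            simpa using h5
        _ = 0 := by simp
    rw [hswap, Finset.sum_eq_zero (fun t _ => by rw [hp0 t, zero_mul])] at hneg
    exact lt_irrefl _ hneg
  -- variational inequality
  have hvar : ∀ i, Q ≤ ∑ t, (v i t : ℝ) * p t := by
    intro i
    set u : Fin k → ℝ := fun t => (v i t:ℝ) - p t with hudef
    set d : ℝ := ∑ t, p t * u t with hddef
    have hdval : ∑ t, (v i t:ℝ) * p t = Q + d := by
      rw [hQdef, hddef, ← Finset.sum_add_distrib]
      refine Finset.sum_congr rfl fun t _ => ?_
      rw [hudef]
      ring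
    rw [hdval]
    rcases le_or_gt 0 d with hd | hd
    · linarith
    exfalso
    set s : ℝ := ∑ t, u t ^ 2 with hsdef
    have hsnn : 0 ≤ s := Finset.sum_nonneg fun t _ => sq_nonneg _
    have hspos : 0 < s := by
      rcases lt_or_eq_of_le hsnn with h' | h'
      · exact h'
      exfalso
      have hu0 : ∀ t, u t = 0 := by
        intro t
        have h2 := (Finset.sum_eq_zero_iff_of_nonneg (fun t _ => sq_nonneg (u t))).mp h'.symm
        exact pow_eq_zero_iff two_ne_zero |>.mp (h2 t (Finset.mem_univ t))
      have : d = 0 := by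
        rw [hddef]
        exact Finset.sum_eq_zero fun t _ => by rw [hu0 t, mul_zero]
      linarith
    set θ : ℝ := min 1 (-d/s) with hθdef
    have hθpos : 0 < θ := lt_min one_pos (div_pos (neg_pos.mpr hd) hspos)
    have hθ1 : θ ≤ 1 := min_le_left _ _
    have hθs : θ * s ≤ -d := by
      have h1 : θ ≤ -d / s := min_le_right _ _
      exact (le_div_iff₀ hspos).mp h1
    set a' : Fin m → ℝ := fun j => (1-θ) * A j + θ * (if j = i then 1 else 0) with ha'def
    have ha'mem : a' ∈ stdSimplex ℝ (Fin m) := by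
      constructor
      · intro j
        have : (0:ℝ) ≤ if j = i then 1 else 0 := by positivity
        have h0 : 0 ≤ (1-θ) * A j := mul_nonneg (by linarith) (hA0 j)
        have h1 : 0 ≤ θ * (if j = i then (1:ℝ) else 0) := mul_nonneg hθpos.le this
        rw [ha'def]
        exact add_nonneg h0 h1
      · rw [ha'def]
        rw [Finset.sum_add_distrib, ← Finset.mul_sum, ← Finset.mul_sum, hA1]
        rw [Finset.sum_ite_eq' Finset.univ i (fun _ => (1:ℝ))]
        simp
    have hinner : ∀ t, ∑ j, a' j * (v j t:ℝ) = p t + θ * u t := by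
      intro t
      have hstep : ∀ j, a' j * (v j t:ℝ)
          = (1-θ) * (A j * (v j t:ℝ)) + θ * ((if j = i then (1:ℝ) else 0) * (v j t:ℝ)) := by
        intro j
        rw [ha'def]
        ring
      rw [Finset.sum_congr rfl (fun j _ => hstep j), Finset.sum_add_distrib,
        ← Finset.mul_sum, ← Finset.mul_sum]
      have hite : ∑ j, (if j = i then (1:ℝ) else 0) * (v j t:ℝ) = (v i t:ℝ) := by
        rw [Finset.sum_congr rfl (fun j _ => by rw [ite_mul, one_mul, zero_mul])]
        rw [Finset.sum_ite_eq' Finset.univ i (fun j => (v j t:ℝ))]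
        simp
      rw [hite]
      have hpt : p t = ∑ j, A j * (v j t:ℝ) := rfl
      rw [← hpt, hudef]
      ring
    have hFa' : F a' = Q + 2*θ*d + θ^2*s := by
      have h1 : F a' = ∑ t, (p t + θ * u t)^2 := by
        rw [hFdef]
        exact Finset.sum_congr rfl fun t _ => by rw [hinner t]
      rw [h1, hQdef, hddef, hsdef]
      rw [show (∑ t, (p t + θ * u t)^2)
          = ∑ t, (p t ^2 + (2*θ) * (p t * u t) + θ^2 * u t ^2) from
        Finset.sum_congr rfl fun t _ => by ring]
      rw [Finset.sum_add_distrib, Finset.sum_add_distrib, ← Finset.mul_sum, ← Finset.mul_sum]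
    have hmin := isMinOn_iff.mp hAmin a' ha'mem
    have hFA : F A = Q := rfl
    rw [hFA, hFa'] at hmin
    have h2 : θ * (θ * s) ≤ θ * (-d) := mul_le_mul_of_nonneg_left hθs hθpos.le
    nlinarith
  -- complementary slackness
  have hcs : ∀ i, A i ≠ 0 → ∑ t, (v i t : ℝ) * p t = Q := by
    have hsum : ∑ i, A i * (∑ t, (v i t:ℝ) * p t - Q) = 0 := by
      rw [show (∑ i, A i * (∑ t, (v i t:ℝ) * p t - Q))
          = (∑ i, A i * ∑ t, (v i t:ℝ) * p t) - (∑ i, A i * Q) from by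
        rw [← Finset.sum_sub_distrib]; exact Finset.sum_congr rfl fun i _ => by ring]
      rw [← Finset.sum_mul, hA1, one_mul]
      have hswap2 : ∑ i, A i * ∑ t, (v i t:ℝ) * p t = Q := by
        calc ∑ i, A i * ∑ t, (v i t:ℝ) * p t
            = ∑ i, ∑ t, A i * (v i t:ℝ) * p t := by
              refine Finset.sum_congr rfl fun i _ => ?_
              rw [Finset.mul_sum]
              exact Finset.sum_congr rfl fun t _ => by ring
          _ = ∑ t, ∑ i, A i * (v i t:ℝ) * p t := Finset.sum_comm
          _ = ∑ t, (∑ i, A i * (v i t:ℝ)) * p t := by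
              refine Finset.sum_congr rfl fun t _ => ?_
              rw [Finset.sum_mul]
          _ = ∑ t, p t * p t := rfl
          _ = Q := by
              rw [hQdef]
              exact Finset.sum_congr rfl fun t _ => (sq (p t)).symm
      rw [hswap2]
      ring
    intro i hAi
    have hterms : ∀ j ∈ Finset.univ, 0 ≤ A j * (∑ t, (v j t:ℝ) * p t - Q) :=
      fun j _ => mul_nonneg (hA0 j) (by have := hvar j; linarith)
    have h3 := (Finset.sum_eq_zero_iff_of_nonneg hterms).mp hsum i (Finset.mem_univ i)
    rcases mul_eq_zero.mp h3 with h4 | h4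
    · exact absurd h4 hAi
    · linarith
  -- apply the key lemma on the support of A
  haveI : Nonempty {i : Fin m // A i ≠ 0} := ⟨⟨i1, hi1⟩⟩
  have hsub : ∀ f : Fin m → ℝ, (∀ i, A i = 0 → f i = 0) →
      ∑ i : {i : Fin m // A i ≠ 0}, f i.val = ∑ i, f i := by
    intro f hf
    have h1 : ∑ i ∈ Finset.univ.filter (fun i => A i ≠ 0), f i
        = ∑ i : {i : Fin m // A i ≠ 0}, f i.val := by
      apply Finset.sum_subtype
      intro x
      simp
    rw [← h1]
    apply Finset.sum_filter_of_ne
    intro x _ hfx hAx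
    exact hfx (hf x hAx)
  have ha1' : ∑ i : {i : Fin m // A i ≠ 0}, A i.val = 1 := by
    rw [hsub (fun i => A i) (fun i hh => hh)]
    exact hA1
  have hpa' : ∀ t, p t = ∑ i : {i : Fin m // A i ≠ 0}, A i.val * (v i.val t : ℝ) := by
    intro t
    have h1 := hsub (fun i => A i * (v i t:ℝ))
      (fun i hh => by show A i * ((v i t:ℝ)) = 0; rw [hh, zero_mul])
    exact h1.symm
  have hwp' : ∀ i : {i : Fin m // A i ≠ 0}, ∑ t, (v i.val t : ℝ) * p t = Q :=
    fun i => hcs i.val i.2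
  obtain ⟨g, hgbound, hgp⟩ := key hN (fun i : {i : Fin m // A i ≠ 0} => v i.val)
    (fun i t => hv i.val t) p (fun i => A i.val) ha1' hpa' Q (ne_of_gt hQpos) hwp'
  set G : ℝ := (Nat.factorial k : ℝ) * (N:ℝ)^(k-1) with hGdef
  have hGpos : 0 < G := by positivity
  have hgR : ∀ t, |(g t : ℝ)| ≤ G := by
    intro t
    have h := hgbound t
    have h2 : ((|g t| : ℤ) : ℝ) ≤ (((Nat.factorial k : ℤ) * (N:ℤ)^(k-1) : ℤ) : ℝ) := by
      exact_mod_cast h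
    have h3 : |(g t:ℝ)| = ((|g t| : ℤ) : ℝ) := by push_cast; rfl
    have h4 : (((Nat.factorial k : ℤ) * (N:ℤ)^(k-1) : ℤ) : ℝ) = G := by
      rw [hGdef]; push_cast; ring
    rw [h3, ← h4]
    exact h2
  set sQ : ℝ := Real.sqrt Q with hsQdef
  have hsQpos : 0 < sQ := Real.sqrt_pos.mpr hQpos
  have hsQsq : sQ^2 = Q := Real.sq_sqrt hQnn
  have hgsum : ∑ t, (g t:ℝ)^2 ≤ (k:ℝ) * G^2 := by
    calc ∑ t, (g t:ℝ)^2 ≤ ∑ _t : Fin k, G^2 := by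
          refine Finset.sum_le_sum fun t _ => ?_
          calc (g t:ℝ)^2 = |(g t:ℝ)|^2 := (sq_abs _).symm
            _ ≤ G^2 := pow_le_pow_left₀ (abs_nonneg _) (hgR t) 2
      _ = (k:ℝ) * G^2 := by
          rw [Finset.sum_const, Finset.card_univ, Fintype.card_fin, nsmul_eq_mul]
  have hone : 1 ≤ Real.sqrt k * G * sQ := by
    have h1 : (1:ℝ) ≤ (∑ t, (g t:ℝ) * p t)^2 := by
      nlinarith [hgp, abs_nonneg (∑ t, (g t:ℝ) * p t), sq_abs (∑ t, (g t:ℝ) * p t)]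
    have hCS := Finset.sum_mul_sq_le_sq_mul_sq Finset.univ (fun t => (g t:ℝ)) p
    have h2 : (∑ t, (g t:ℝ)*p t)^2 ≤ ((k:ℝ) * G^2) * Q := by
      calc (∑ t, (g t:ℝ)*p t)^2 ≤ (∑ t, (g t:ℝ)^2) * (∑ t, p t^2) := hCS
        _ ≤ ((k:ℝ) * G^2) * Q := by
            apply mul_le_mul_of_nonneg_right hgsum
            exact Finset.sum_nonneg fun t _ => sq_nonneg _
    have h3 : (Real.sqrt k * G * sQ)^2 = (k:ℝ) * G^2 * Q := by
      rw [mul_pow, mul_pow, Real.sq_sqrt (Nat.cast_nonneg k), hsQsq]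
    by_contra hlt
    push_neg at hlt
    have hx0 : 0 ≤ Real.sqrt k * G * sQ := by positivity
    nlinarith
  set c : ℝ := ((k:ℝ) * (N:ℝ) + 1)/2 with hcdef
  have hcpos : 0 < c := by positivity
  set μ : Fin k → ℝ := fun t => -(p t) / Q with hμdef
  set lam : Fin k → ℤ := fun t => round (c * μ t) with hlamdef
  have hround : ∀ t, |(lam t : ℝ) - c * μ t| ≤ 1/2 := by
    intro t
    rw [abs_sub_comm]
    exact abs_sub_round (c * μ t)
  have hval : ∀ i, ∑ t, (v i t:ℝ) * (lam t:ℝ) ≤ -(1/2) := by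
    intro i
    have hsplit : ∑ t, (v i t:ℝ) * (lam t:ℝ)
        = (∑ t, (v i t:ℝ) * ((lam t:ℝ) - c * μ t)) + c * ∑ t, (v i t:ℝ) * μ t := by
      rw [Finset.mul_sum, ← Finset.sum_add_distrib]
      exact Finset.sum_congr rfl fun t _ => by ring
    have hb1 : ∑ t, (v i t:ℝ) * ((lam t:ℝ) - c * μ t) ≤ (k:ℝ) * (N:ℝ) / 2 := by
      calc ∑ t, (v i t:ℝ) * ((lam t:ℝ) - c * μ t)
          ≤ ∑ t, |(v i t:ℝ) * ((lam t:ℝ) - c * μ t)| :=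
            Finset.sum_le_sum fun t _ => le_abs_self _
        _ ≤ ∑ _t : Fin k, (N:ℝ) * (1/2) := by
            refine Finset.sum_le_sum fun t _ => ?_
            rw [abs_mul]
            apply mul_le_mul ?_ (hround t) (abs_nonneg _) (Nat.cast_nonneg N)
            exact_mod_cast hv i t
        _ = (k:ℝ) * (N:ℝ)/2 := by
            rw [Finset.sum_const, Finset.card_univ, Fintype.card_fin, nsmul_eq_mul]
            ring
    have hb2 : ∑ t, (v i t:ℝ) * μ t ≤ -1 := by
      have he' : ∑ t, (v i t:ℝ) * μ t + (∑ t, (v i t:ℝ) * p t) / Q = 0 := by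
        rw [Finset.sum_div, ← Finset.sum_add_distrib]
        apply Finset.sum_eq_zero
        intro t _
        show (v i t:ℝ) * μ t + (v i t:ℝ) * p t / Q = 0
        simp only [hμdef]
        field_simp
        ring
      have hdiv : 1 ≤ (∑ t, (v i t:ℝ) * p t) / Q := (one_le_div hQpos).mpr (hvar i)
      linarith
    have h4 : c * ∑ t, (v i t:ℝ) * μ t ≤ c * (-1) := mul_le_mul_of_nonneg_left hb2 hcpos.le
    have hcval : c = ((k:ℝ) * (N:ℝ) + 1)/2 := hcdef
    rw [hsplit]
    linarith
  refine ⟨lam, ?_, ?_⟩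
  · -- the size bound
    intro t
    have hμb : |μ t| ≤ Real.sqrt k * G := by
      have hpt2 : p t ^ 2 ≤ Q :=
        Finset.single_le_sum (f := fun t => p t^2) (fun t _ => sq_nonneg _) (Finset.mem_univ t)
      have hpt : |p t| ≤ sQ := by
        rw [hsQdef]
        calc |p t| = Real.sqrt (p t ^ 2) := (Real.sqrt_sq_eq_abs _).symm
          _ ≤ Real.sqrt Q := Real.sqrt_le_sqrt hpt2
      have h5 : |μ t| = |p t| / Q := by
        rw [hμdef]
        rw [show (fun t => -(p t) / Q) t = -(p t)/Q from rfl, abs_div, abs_neg, abs_of_pos hQpos]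
      rw [h5]
      have h6 : |p t| / Q ≤ sQ / Q := by gcongr
      have h7 : sQ / Q = 1 / sQ := by
        have hsQne : sQ ≠ 0 := ne_of_gt hsQpos
        rw [← hsQsq, sq]
        field_simp
      have h8 : 1 / sQ ≤ Real.sqrt k * G := by
        rw [div_le_iff₀ hsQpos]
        exact hone
      linarith
    have hlamR : |(lam t : ℝ)| ≤ 1/2 + c * (Real.sqrt k * G) := by
      have h9 : |(lam t:ℝ)| ≤ |(lam t:ℝ) - c * μ t| + |c * μ t| := by
        have h99 := abs_add_le ((lam t:ℝ) - c*μ t) (c * μ t)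
        simpa using h99
      have h10 : |c * μ t| ≤ c * (Real.sqrt k * G) := by
        rw [abs_mul, abs_of_pos hcpos]
        exact mul_le_mul_of_nonneg_left hμb hcpos.le
      linarith [hround t]
    -- numeric estimate
    have hkR : (1:ℝ) ≤ (k:ℝ) := by exact_mod_cast hk
    have hNR : (1:ℝ) ≤ (N:ℝ) := by exact_mod_cast hN
    have hsqk : Real.sqrt k ≤ (k:ℝ) := by
      have h12 : Real.sqrt (k:ℝ) ≤ Real.sqrt ((k:ℝ)^2) := by
        apply Real.sqrt_le_sqrt
        nlinarith
      rwa [Real.sqrt_sq (by positivity)] at h12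
    have hcle : c ≤ (k:ℝ) * (N:ℝ) := by
      rw [hcdef]
      nlinarith
    have hGle : G ≤ (k:ℝ)^(k-1) * (N:ℝ)^(k-1) := by
      rw [hGdef]
      gcongr
      exact_mod_cast fact_le_pow_pred k
    have hchain : c * (Real.sqrt k * G) ≤ (k:ℝ)^(k+1) * (N:ℝ)^k := by
      have hstep : c * (Real.sqrt k * G)
          ≤ ((k:ℝ) * (N:ℝ)) * ((k:ℝ) * ((k:ℝ)^(k-1) * (N:ℝ)^(k-1))) := by
        have hG0 : (0:ℝ) ≤ G := hGpos.le
        have hsq0 : (0:ℝ) ≤ Real.sqrt k := Real.sqrt_nonneg _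
        apply mul_le_mul hcle ?_ (by positivity) (by positivity)
        apply mul_le_mul hsqk hGle hG0 (by positivity)
      have heq : ((k:ℝ) * (N:ℝ)) * ((k:ℝ) * ((k:ℝ)^(k-1) * (N:ℝ)^(k-1)))
          = (k:ℝ)^(k-1+2) * (N:ℝ)^(k-1+1) := by ring
      have he1 : k - 1 + 2 = k + 1 := by omega
      have he2 : k - 1 + 1 = k := by omega
      rw [heq, he1, he2] at hstep
      exact hstep
    have hNk : (N:ℝ)^k ≤ (N:ℝ)^(k+1) := by
      apply pow_le_pow_right₀ hNR
      omega
    have hTR : ((((k * N : ℕ) : ℤ) ^ (k + 1) : ℤ) : ℝ) = ((k:ℝ)*(N:ℝ))^(k+1) := by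
      push_cast
      ring
    have hfin : |(lam t:ℝ)| < ((k:ℝ)*(N:ℝ))^(k+1) + 1 := by
      have hmp : ((k:ℝ)*(N:ℝ))^(k+1) = (k:ℝ)^(k+1) * (N:ℝ)^(k+1) := mul_pow _ _ _
      have hk1 : (k:ℝ)^(k+1) * (N:ℝ)^k ≤ (k:ℝ)^(k+1) * (N:ℝ)^(k+1) := by
        apply mul_le_mul_of_nonneg_left hNk (by positivity)
      rw [hmp]
      calc |(lam t:ℝ)| ≤ 1/2 + c * (Real.sqrt k * G) := hlamR
        _ ≤ 1/2 + (k:ℝ)^(k+1) * (N:ℝ)^k := by linarith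
        _ < (k:ℝ)^(k+1) * (N:ℝ)^(k+1) + 1 := by linarith
    have hZ : |lam t| < ((k * N : ℕ) : ℤ) ^ (k + 1) + 1 := by
      have hcast2 : ((|lam t| : ℤ) : ℝ) = |(lam t:ℝ)| := by push_cast; rfl
      have := hfin
      rw [← hTR] at this
      rw [← hcast2] at this
      exact_mod_cast this
    omega
  · -- the value bound
    intro i
    have hS := hval i
    have hcast : ((∑ t, v i t * lam t : ℤ) : ℝ) = ∑ t, (v i t:ℝ) * (lam t:ℝ) := by
      push_cast
      rfl
    have h11 : ((∑ t, v i t * lam t : ℤ):ℝ) ≤ -(1/2) := by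
      rw [hcast]
      exact hS
    by_contra hcon
    push_neg at hcon
    have h12 : (0:ℤ) ≤ ∑ t, v i t * lam t := by omega
    have h13 : (0:ℝ) ≤ ((∑ t, v i t * lam t : ℤ):ℝ) := by exact_mod_cast h12
    linarith
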